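/- Let m ≥ 2 and k ≥ 1, and let T_{m,k} be the balanced m-ary tree of depth k. Then the minimum cardinality of a propagating set consisting only of leaves equals the unrestricted minimum: π_leaf(T_{m,k}) = π(T_{m,k}). Equivalently, there exists a set S of leaves of T_{m,k} with S ↷ T_{m,k} and #S = π(T_{m,k}). -/

import Mathlib

set_option maxHeartbeats 1000000


/-- The propagation closure: `PropReach G S v` means vertex `v` eventually receives the
information when the process starts from the set `S` on the graph `G`.  A vertex `w` can be
added whenever some vertex `v` already having the information is adjacent to `w` and every
neighbour of `v` other than `w` already has the information. -/
inductive PropReach {V : Type*} (G : SimpleGraph V) (S : Set V) : V → Prop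
  | base {v : V} (hv : v ∈ S) : PropReach G S v
  | step {v w : V} (hv : PropReach G S v) (hadj : G.Adj v w)
      (hall : ∀ x : V, G.Adj v x → x ≠ w → PropReach G S x) : PropReach G S w

/-- `S ↷ G` : the set `S` propagates to (all of) the graph `G`. -/
def Propagates {V : Type*} (G : SimpleGraph V) (S : Set V) : Prop :=
  ∀ v : V, PropReach G S v

/-- `π(G)`: the minimum cardinality of a set of vertices propagating to `G`. -/
noncomputable def propNum {V : Type*} (G : SimpleGraph V) : ℕ :=
  sInf {n : ℕ | ∃ S : Set V, S.ncard = n ∧ Propagates G S}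

/-- The balanced `m`-ary tree of depth `d`: vertices are words over an alphabet of
size `m` of length at most `d` (the root is the empty word), and each vertex `l` of
length `< d` is adjacent to its `m` children `x :: l`. -/
def BalancedTree (m d : ℕ) : SimpleGraph {l : List (Fin m) // l.length ≤ d} where
  Adj a b := (∃ x : Fin m, (a : List (Fin m)) = x :: (b : List (Fin m))) ∨
             (∃ x : Fin m, (b : List (Fin m)) = x :: (a : List (Fin m)))
  symm := ⟨fun a b h => h.symm⟩
  loopless := ⟨by
    rintro a (⟨x, hx⟩ | ⟨x, hx⟩) <;> simpa using congrArg List.length hx⟩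

namespace BTaux

abbrev V (m k : ℕ) := {l : List (Fin m) // l.length ≤ k}

theorem adj_iff {m d : ℕ} (a b : V m d) :
    (BalancedTree m d).Adj a b ↔
      (∃ x : Fin m, a.1 = x :: b.1) ∨ (∃ x : Fin m, b.1 = x :: a.1) := Iff.rfl

def lastF (m' : ℕ) : Fin (m'+2) := ⟨m'+1, by omega⟩

theorem zero_ne_lastF (m' : ℕ) : (0 : Fin (m'+2)) ≠ lastF m' := by
  simp [lastF, Fin.ext_iff]

def SS (m' : ℕ) : (k : ℕ) → Finset (V (m'+2) k)
  | 0 => {⟨[], by simp⟩}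
  | 1 => (Finset.univ.filter (fun a : Fin (m'+2) => a ≠ lastF m')).image
      (fun a => ⟨[a], by simp⟩)
  | (k+2) =>
      ((Finset.univ.filter (fun a : Fin (m'+2) => a ≠ lastF m')) ×ˢ
        (Finset.univ : Finset (Fin (k+1) → Fin (m'+2)))).image
        (fun q => ⟨q.1 :: List.ofFn q.2, by simp⟩) ∪
      (SS m' k).image (fun v => ⟨lastF m' :: 0 :: v.1, by
        have := v.2; simp only [List.length_cons]; omega⟩)

theorem SS_len (m' : ℕ) : ∀ (k : ℕ), ∀ s ∈ SS m' k, (s : V (m'+2) k).1.length = k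
  | 0 => by intro s hs; simp [SS] at hs; subst hs; simp
  | 1 => by
      intro s hs
      simp only [SS, Finset.mem_image] at hs
      obtain ⟨a, -, rfl⟩ := hs; simp
  | (k+2) => by
      intro s hs
      simp only [SS, Finset.mem_union, Finset.mem_image] at hs
      rcases hs with ⟨q, -, rfl⟩ | ⟨v, hv, rfl⟩
      · simp
      · have := SS_len m' k v hv; simp [this]

theorem exists_ofFn {α : Type*} {n : ℕ} (l : List α) (h : l.length = n) :
    ∃ f : Fin n → α, l = List.ofFn f := by
  subst h
  exact ⟨l.get, (List.ofFn_get l).symm⟩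

/-- membership in the first part of `SS (k+2)` -/
theorem mem_SS_first {m' k : ℕ} (a : Fin (m'+2)) (t : List (Fin (m'+2)))
    (ha : a ≠ lastF m') (ht : t.length = k + 1) (h : (a :: t).length ≤ k + 2) :
    (⟨a :: t, h⟩ : V (m'+2) (k+2)) ∈ SS m' (k+2) := by
  obtain ⟨f, rfl⟩ := exists_ofFn t ht
  apply Finset.mem_union_left
  exact Finset.mem_image.2 ⟨(a, f), by simp [ha], rfl⟩

theorem mem_SS_lift {m' k : ℕ} {v : V (m'+2) k} (hv : v ∈ SS m' k)
    (h : (lastF m' :: 0 :: v.1).length ≤ k + 2) :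
    (⟨lastF m' :: 0 :: v.1, h⟩ : V (m'+2) (k+2)) ∈ SS m' (k+2) :=
  Finset.mem_union_right _ (Finset.mem_image.2 ⟨v, hv, rfl⟩)

/-- a vertex of maximal length has only its parent as neighbour -/
theorem adj_max_len {m d : ℕ} {ℓ x : V m d} (hℓ : ℓ.1.length = d)
    (h : (BalancedTree m d).Adj ℓ x) : ∃ c, ℓ.1 = c :: x.1 := by
  rcases h with h | ⟨c, hc⟩
  · exact h
  · exfalso
    have hx2 := x.2
    have hlen := congrArg List.length hc
    simp [hℓ] at hlen
    omega

def ι {m k : ℕ} (v : V m k) : V m (k+2) := ⟨v.1, le_trans v.2 (by omega)⟩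

theorem transfer {m' k : ℕ} {S₂ : Set (V (m'+2) (k+2))}
    (hS : ∀ v ∈ SS m' k, PropReach (BalancedTree (m'+2) (k+2)) S₂ (ι v))
    (hup : ∀ w : V (m'+2) (k+2), w.1.length = k+1 →
      PropReach (BalancedTree (m'+2) (k+2)) S₂ w)
    {u : V (m'+2) k} (h : PropReach (BalancedTree (m'+2) k) (↑(SS m' k)) u) :
    PropReach (BalancedTree (m'+2) (k+2)) S₂ (ι u) := by
  induction h with
  | base hv => exact hS _ hv
  | @step v w hv hadj hall ihv ihall =>
    refine .step ihv ?_ ?_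
    · exact hadj
    · intro x hx hne
      by_cases hlek : x.1.length ≤ k
      · have hx' : (BalancedTree (m'+2) k).Adj v ⟨x.1, hlek⟩ := hx
        have hne' : (⟨x.1, hlek⟩ : V (m'+2) k) ≠ w := by
          intro hcon
          exact hne (by simp [ι, Subtype.ext_iff] at hcon ⊢; exact hcon)
        exact ihall _ hx' hne'
      · apply hup
        rcases hx with ⟨c, hc⟩ | ⟨c, hc⟩
        · exfalso
          have h2 := v.2
          have hlen := congrArg List.length hc
          simp [ι] at hlen
          omega
        · have h2 := v.2
          have hlen := congrArg List.length hc
          simp [ι] at hlen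
          omega



theorem SS_prop (m' : ℕ) : ∀ (k : ℕ), Propagates (BalancedTree (m'+2) k) (↑(SS m' k) : Set _)
  | 0 => by
      intro v
      have hv : v = ⟨[], by simp⟩ := Subtype.ext (List.eq_nil_of_length_eq_zero
        (by have := v.2; omega))
      exact .base (by rw [hv]; simp [SS])
  | 1 => by
      have h0mem : (⟨[0], by simp⟩ : V (m'+2) 1) ∈ SS m' 1 :=
        Finset.mem_image.2 ⟨0, by simp [zero_ne_lastF], rfl⟩
      have hroot : PropReach (BalancedTree (m'+2) 1) (↑(SS m' 1)) ⟨[], by simp⟩ := by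
        refine .step (.base (Finset.mem_coe.2 h0mem)) (Or.inl ⟨0, rfl⟩) ?_
        intro x hx hne
        exfalso
        obtain ⟨c, hc⟩ := adj_max_len (by simp) hx
        obtain ⟨hc1, hc2⟩ := List.cons.inj hc
        exact hne (Subtype.ext hc2.symm)
      intro v
      obtain ⟨l, hl⟩ := v
      match l, hl with
      | [], hl => exact hroot
      | [a], hl =>
        by_cases ha : a = lastF m'
        · refine .step hroot (Or.inr ⟨a, rfl⟩) ?_
          intro x hx hne
          rcases hx with ⟨c, hc⟩ | ⟨c, hc⟩
          · exact absurd hc (by simp)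
          · refine .base (Finset.mem_coe.2 (Finset.mem_image.2 ⟨c, ?_, Subtype.ext hc.symm⟩))
            simp only [Finset.mem_filter, Finset.mem_univ, true_and]
            intro hcl
            apply hne
            apply Subtype.ext
            rw [hc, hcl, ha]
        · exact .base (Finset.mem_coe.2 (Finset.mem_image.2 ⟨a, by simp [ha], rfl⟩))
      | a :: b :: t, hl => simp at hl
  | (k+2) => by
      have IH := SS_prop m' k
      have step1 : ∀ w : V (m'+2) (k+2), w.1.length = k+1 →
          PropReach (BalancedTree (m'+2) (k+2)) (↑(SS m' (k+2))) w := by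
        intro w hw
        have hmem := mem_SS_first (k := k) 0 w.1 (zero_ne_lastF m') hw
          (by simp only [List.length_cons]; omega)
        refine .step (.base (Finset.mem_coe.2 hmem)) (Or.inl ⟨0, rfl⟩) ?_
        intro x hx hne
        exfalso
        obtain ⟨c, hc⟩ := adj_max_len (by simp only [List.length_cons]; omega) hx
        obtain ⟨hc1, hc2⟩ := List.cons.inj hc
        exact hne (Subtype.ext hc2.symm)
      have step2 : ∀ v ∈ SS m' k, PropReach (BalancedTree (m'+2) (k+2)) (↑(SS m' (k+2))) (ι v) := by
        intro v hv
        have hlen := SS_len m' k v hv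
        have hple : ((0 : Fin (m'+2)) :: v.1).length ≤ k+2 := by
          simp only [List.length_cons, hlen]; omega
        have hp : (((⟨(0 : Fin (m'+2)) :: v.1, hple⟩ : V (m'+2) (k+2))).1).length = k+1 := by
          simp only [List.length_cons, hlen]
        refine .step (step1 _ hp) (Or.inl ⟨0, rfl⟩) ?_
        intro x hx hne
        rcases hx with ⟨c, hc⟩ | ⟨c, hc⟩
        · exfalso
          obtain ⟨hc1, hc2⟩ := List.cons.inj hc
          exact hne (Subtype.ext hc2.symm)
        · by_cases hcl : c = lastF m'
          · subst hcl
            have hx_eq : x = ⟨lastF m' :: 0 :: v.1, by rw [← hc]; exact x.2⟩ := Subtype.ext hc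
            rw [hx_eq]
            exact .base (Finset.mem_coe.2 (mem_SS_lift hv _))
          · have hx_eq : x = ⟨c :: (0 :: v.1), by rw [← hc]; exact x.2⟩ := Subtype.ext hc
            rw [hx_eq]
            exact .base (Finset.mem_coe.2 (mem_SS_first c _ hcl (by simp [hlen]) _))
      have step3 : ∀ x : V (m'+2) (k+2), x.1.length ≤ k →
          PropReach (BalancedTree (m'+2) (k+2)) (↑(SS m' (k+2))) x := by
        intro x hx
        exact transfer step2 step1 (IH ⟨x.1, hx⟩)
      intro u
      obtain ⟨l, hl⟩ := u
      rcases Nat.lt_or_ge l.length (k+1) with hcase | hcase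
      · exact step3 ⟨l, hl⟩ (by simpa using Nat.lt_succ_iff.1 hcase)
      rcases Nat.lt_or_ge l.length (k+2) with hcase2 | hcase2
      · exact step1 ⟨l, hl⟩ (by simp; omega)
      have hlen : l.length = k+2 := by omega
      obtain ⟨c, t, rfl⟩ : ∃ c t, l = c :: t := by
        cases l with
        | nil => simp at hlen
        | cons c t => exact ⟨c, t, rfl⟩
      have ht : t.length = k+1 := by simpa using hlen
      by_cases hcl : c = lastF m'
      · refine .step (step1 ⟨t, by omega⟩ ht) (Or.inr ⟨c, rfl⟩) ?_
        intro x hx hne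
        rcases hx with ⟨c', hc'⟩ | ⟨c', hc'⟩
        · apply step3
          have := congrArg List.length hc'
          simp at this
          omega
        · by_cases hc'l : c' = lastF m'
          · exfalso
            apply hne
            apply Subtype.ext
            rw [hc', hc'l, hcl]
          · have hx_eq : x = ⟨c' :: t, by rw [← hc']; exact x.2⟩ := Subtype.ext hc'
            rw [hx_eq]
            exact .base (Finset.mem_coe.2 (mem_SS_first c' t hc'l ht _))
      · exact .base (Finset.mem_coe.2 (mem_SS_first c t hcl ht hl))


noncomputable instance (m k : ℕ) : Fintype (V m k) :=
  Set.Finite.fintype (List.finite_length_le (Fin m) k)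

instance (m d : ℕ) : DecidableRel (BalancedTree m d).Adj := fun a b =>
  decidable_of_iff _ (adj_iff a b).symm

noncomputable def Ksub (m d : ℕ) : Submodule ℚ (V m d → ℚ) where
  carrier := {x | ∀ v : V m d,
    ∑ u ∈ Finset.univ.filter (fun u => (BalancedTree m d).Adj v u), x u = 0}
  add_mem' := by
    intro a b ha hb
    intro v
    simp only [Pi.add_apply, Finset.sum_add_distrib, ha v, hb v, add_zero]
  zero_mem' := by intro v; simp
  smul_mem' := by
    intro c x hx
    intro v
    simp only [Pi.smul_apply, smul_eq_mul, ← Finset.mul_sum, hx v, mul_zero]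

theorem tail_len_le {m d : ℕ} (v : V m d) : v.1.tail.length ≤ d := by
  have := v.2
  simp only [List.length_tail]
  omega

theorem cons_len_le {m d : ℕ} (v : V m d) (a : Fin m) (h : v.1.length < d) :
    (a :: v.1).length ≤ d := by
  simp only [List.length_cons]; omega

theorem sum_adj {m d : ℕ} (x : V m d → ℚ) (v : V m d) :
    ∑ u ∈ Finset.univ.filter (fun u => (BalancedTree m d).Adj v u), x u =
    (if v.1 = [] then 0 else x ⟨v.1.tail, tail_len_le v⟩)
    + (if h : v.1.length < d then ∑ a : Fin m, x ⟨a :: v.1, cons_len_le v a h⟩ else 0) := by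
  have hsplit : Finset.univ.filter (fun u => (BalancedTree m d).Adj v u) =
      (Finset.univ.filter (fun u : V m d => ∃ c : Fin m, v.1 = c :: u.1)) ∪
      (Finset.univ.filter (fun u : V m d => ∃ c : Fin m, u.1 = c :: v.1)) := by
    rw [← Finset.filter_or]
    apply Finset.filter_congr
    intro u _
    exact Iff.rfl
  have hdisj : Disjoint
      (Finset.univ.filter (fun u : V m d => ∃ c : Fin m, v.1 = c :: u.1))
      (Finset.univ.filter (fun u : V m d => ∃ c : Fin m, u.1 = c :: v.1)) := by
    rw [Finset.disjoint_left]
    rintro u hu1 hu2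
    simp only [Finset.mem_filter] at hu1 hu2
    obtain ⟨-, c, hc⟩ := hu1
    obtain ⟨-, c', hc'⟩ := hu2
    have h1 := congrArg List.length hc
    have h2 := congrArg List.length hc'
    simp only [List.length_cons] at h1 h2
    omega
  rw [hsplit, Finset.sum_union hdisj]
  congr 1
  · by_cases hv : v.1 = []
    · rw [if_pos hv]
      apply Finset.sum_eq_zero
      intro u hu
      exfalso
      simp only [Finset.mem_filter, hv] at hu
      obtain ⟨-, c, hc⟩ := hu
      exact List.cons_ne_nil _ _ hc.symm
    · rw [if_neg hv]
      obtain ⟨c₀, t, hvt⟩ : ∃ c t, v.1 = c :: t := by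
        cases hl : v.1 with
        | nil => exact absurd hl hv
        | cons c t => exact ⟨c, t, rfl⟩
      have hone : (Finset.univ.filter (fun u : V m d => ∃ c : Fin m, v.1 = c :: u.1)) =
          {⟨v.1.tail, tail_len_le v⟩} := by
        ext u
        simp only [Finset.mem_filter, Finset.mem_univ, true_and, Finset.mem_singleton]
        constructor
        · rintro ⟨c, hc⟩
          apply Subtype.ext
          show u.1 = v.1.tail
          rw [hc, List.tail_cons]
        · rintro rfl
          refine ⟨c₀, ?_⟩
          show v.1 = c₀ :: v.1.tail
          rw [hvt, List.tail_cons]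
      rw [hone, Finset.sum_singleton]
  · by_cases hd : v.1.length < d
    · rw [dif_pos hd]
      have himg : (Finset.univ.filter (fun u : V m d => ∃ c : Fin m, u.1 = c :: v.1)) =
          Finset.univ.image (fun a : Fin m => (⟨a :: v.1, cons_len_le v a hd⟩ : V m d)) := by
        ext u
        simp only [Finset.mem_filter, Finset.mem_univ, true_and, Finset.mem_image]
        constructor
        · rintro ⟨c, hc⟩
          exact ⟨c, Subtype.ext hc.symm⟩
        · rintro ⟨a, rfl⟩
          exact ⟨a, rfl⟩
      rw [himg, Finset.sum_image ?_]
      intro a _ b _ hab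
      have := congrArg (fun u : V m d => u.1) hab
      simp only at this
      exact (List.cons.inj this).1
    · rw [dif_neg hd]
      apply Finset.sum_eq_zero
      intro u hu
      exfalso
      simp only [Finset.mem_filter] at hu
      obtain ⟨-, c, hc⟩ := hu
      have h1 := congrArg List.length hc
      have h2 := u.2
      simp only [List.length_cons] at h1
      omega

theorem K0_top {m : ℕ} (x : V m 0 → ℚ) : x ∈ Ksub m 0 := by
  intro v
  rw [sum_adj]
  have hv : v.1 = [] := List.eq_nil_of_length_eq_zero (by have := v.2; omega)
  rw [if_pos hv, dif_neg (by omega)]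
  ring

theorem sum_cons_ite {m d : ℕ} (v : V m d) (h : v.1.length < d) (ℓ : V m d)
    (c : Fin m) (t : List (Fin m)) (hct : ℓ.1 = c :: t) :
    ∑ a : Fin m, (if (⟨a :: v.1, cons_len_le v a h⟩ : V m d) = ℓ then (1:ℚ) else 0) =
      if v.1 = t then 1 else 0 := by
  by_cases hvt : v.1 = t
  · subst hvt
    rw [if_pos rfl]
    have : ∀ a : Fin m, (if (⟨a :: v.1, cons_len_le v a h⟩ : V m d) = ℓ then (1:ℚ) else 0) =
        if a = c then 1 else 0 := by
      intro a
      congr 1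
      simp only [Subtype.ext_iff, hct, eq_iff_iff]
      constructor
      · intro hh; exact (List.cons.inj hh).1
      · rintro rfl; rfl
    rw [Finset.sum_congr rfl (fun a _ => this a)]
    simp
  · rw [if_neg hvt]
    apply Finset.sum_eq_zero
    intro a _
    rw [if_neg]
    intro hh
    rw [Subtype.ext_iff, hct] at hh
    exact hvt (List.cons.inj hh).2

theorem diff_ker {m d : ℕ} (ℓ1 ℓ2 : V m d) (h1 : ℓ1.1.length = d) (h2 : ℓ2.1.length = d)
    (ht : ℓ1.1.tail = ℓ2.1.tail) (hd : 1 ≤ d) :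
    (fun u => (if u = ℓ1 then (1:ℚ) else 0) - (if u = ℓ2 then 1 else 0)) ∈ Ksub m d := by
  obtain ⟨c1, t1, hct1⟩ : ∃ c t, ℓ1.1 = c :: t := by
    cases hl : ℓ1.1 with
    | nil => rw [hl] at h1; simp at h1; omega
    | cons c t => exact ⟨c, t, rfl⟩
  obtain ⟨c2, t2, hct2⟩ : ∃ c t, ℓ2.1 = c :: t := by
    cases hl : ℓ2.1 with
    | nil => rw [hl] at h2; simp at h2; omega
    | cons c t => exact ⟨c, t, rfl⟩
  have htt : t1 = t2 := by
    have := ht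
    rw [hct1, hct2] at this
    simpa using this
  subst htt
  intro v
  rw [sum_adj]
  have hpar : (if v.1 = [] then (0:ℚ) else
      (if (⟨v.1.tail, tail_len_le v⟩ : V m d) = ℓ1 then (1:ℚ) else 0) -
      (if (⟨v.1.tail, tail_len_le v⟩ : V m d) = ℓ2 then 1 else 0)) = 0 := by
    by_cases hv : v.1 = []
    · rw [if_pos hv]
    · rw [if_neg hv, if_neg, if_neg]
      · ring
      · intro hh
        have := congrArg (fun u : V m d => u.1.length) hh
        simp only [List.length_tail] at this
        have := v.2
        omega
      · intro hh
        have := congrArg (fun u : V m d => u.1.length) hh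
        simp only [List.length_tail] at this
        have := v.2
        omega
  rw [hpar]
  by_cases hlt : v.1.length < d
  · rw [dif_pos hlt]
    rw [Finset.sum_sub_distrib, sum_cons_ite v hlt ℓ1 c1 t1 hct1, sum_cons_ite v hlt ℓ2 c2 t1 hct2]
    ring
  · rw [dif_neg hlt]
    ring

def lift {m' k : ℕ} (y : V (m'+2) k → ℚ) : V (m'+2) (k+2) → ℚ := fun u =>
  if h : u.1.length ≤ k then y ⟨u.1, h⟩
  else if u.1.length = k+1 then 0
  else if u.1.head? = some (lastF m') then
    -y ⟨u.1.tail.tail, by simp only [List.length_tail]; have := u.2; omega⟩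
  else 0

theorem lift_at_low {m' k : ℕ} (y : V (m'+2) k → ℚ) (u : V (m'+2) (k+2))
    (h : u.1.length ≤ k) : lift y u = y ⟨u.1, h⟩ := by
  rw [lift, dif_pos h]

theorem lift_at_mid {m' k : ℕ} (y : V (m'+2) k → ℚ) (u : V (m'+2) (k+2))
    (h : u.1.length = k+1) : lift y u = 0 := by
  rw [lift, dif_neg (by omega), if_pos h]

theorem lift_at_top {m' k : ℕ} (y : V (m'+2) k → ℚ) (c : Fin (m'+2)) (t : List (Fin (m'+2)))
    (hu : (c :: t).length ≤ k + 2) (h : t.length = k+1) :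
    lift y ⟨c :: t, hu⟩ = if c = lastF m' then
      -y ⟨t.tail, by simp only [List.length_tail]; omega⟩ else 0 := by
  rw [lift, dif_neg (by simp only [List.length_cons]; omega),
    if_neg (by simp only [List.length_cons]; omega)]
  by_cases hc : c = lastF m'
  · rw [if_pos (by simp [hc]), if_pos hc]
    congr 1
  · rw [if_neg (by simp [hc]), if_neg hc]

theorem tail_len_le' {m d : ℕ} (l : List (Fin m)) (hl : l.length ≤ d) : l.tail.length ≤ d := by
  simp only [List.length_tail]; omega

theorem cons_len_le' {m d : ℕ} (l : List (Fin m)) (h : l.length < d) (a : Fin m) :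
    (a :: l).length ≤ d := by
  simp only [List.length_cons]; omega

theorem sum_adj' {m d : ℕ} (x : V m d → ℚ) (l : List (Fin m)) (hl : l.length ≤ d) :
    ∑ u ∈ Finset.univ.filter (fun u => (BalancedTree m d).Adj ⟨l, hl⟩ u), x u =
    (if l = [] then 0 else x ⟨l.tail, tail_len_le' l hl⟩)
    + (if h : l.length < d then ∑ a : Fin m, x ⟨a :: l, cons_len_le' l h a⟩ else 0) :=
  sum_adj x ⟨l, hl⟩

theorem lift_ker {m' k : ℕ} {y : V (m'+2) k → ℚ} (hy : y ∈ Ksub (m'+2) k) :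
    lift y ∈ Ksub (m'+2) (k+2) := by
  intro v
  obtain ⟨l, hl⟩ := v
  rw [sum_adj']
  by_cases h0 : l.length ≤ k
  · have key := hy ⟨l, h0⟩
    rw [sum_adj' y l h0] at key
    have epar : (if l = [] then (0:ℚ) else lift y ⟨l.tail, tail_len_le' l hl⟩)
        = (if l = [] then (0:ℚ) else y ⟨l.tail, tail_len_le' l h0⟩) := by
      by_cases hnil : l = []
      · rw [if_pos hnil, if_pos hnil]
      · rw [if_neg hnil, if_neg hnil, lift_at_low y _ (tail_len_le' l h0)]
    rw [epar]
    by_cases hlt : l.length < k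
    · rw [dif_pos (by omega : l.length < k + 2), dif_pos hlt] at *
      have echild : ∀ a : Fin (m'+2),
          lift y ⟨a :: l, cons_len_le' l (by omega) a⟩ = y ⟨a :: l, cons_len_le' l hlt a⟩ := by
        intro a
        exact lift_at_low y _ (by simp only [List.length_cons]; omega)
      rw [Finset.sum_congr rfl (fun a _ => echild a)]
      exact key
    · -- l.length = k
      have hlk : l.length = k := by omega
      rw [dif_neg hlt] at key
      rw [dif_pos (by omega : l.length < k + 2)]
      have echild : ∀ a : Fin (m'+2),
          lift y ⟨a :: l, cons_len_le' l (by omega) a⟩ = 0 := by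
        intro a
        exact lift_at_mid y _ (by simp only [List.length_cons]; omega)
      rw [Finset.sum_congr rfl (fun a _ => echild a)]
      simpa using key
  · by_cases h1 : l.length = k + 1
    · -- middle level
      have hnil : l ≠ [] := by intro h; rw [h] at h1; simp at h1
      rw [if_neg hnil, dif_pos (by omega : l.length < k+2)]
      have epar : lift y ⟨l.tail, tail_len_le' l hl⟩ =
          y ⟨l.tail, by simp only [List.length_tail]; omega⟩ :=
        lift_at_low y _ (by simp only [List.length_tail]; omega)
      have echild : ∀ a : Fin (m'+2),
          lift y ⟨a :: l, cons_len_le' l (by omega) a⟩ =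
          (if a = lastF m' then -y ⟨l.tail, by simp only [List.length_tail]; omega⟩ else 0) := by
        intro a
        exact lift_at_top y a l (by simp only [List.length_cons]; omega) h1
      rw [epar, Finset.sum_congr rfl (fun a _ => echild a)]
      rw [Finset.sum_ite_eq' Finset.univ (lastF m')
        (fun _ => -y ⟨l.tail, by simp only [List.length_tail]; omega⟩)]
      simp
    · -- top level
      have h2 : l.length = k + 2 := by omega
      have hnil : l ≠ [] := by intro h; rw [h] at h2; simp at h2
      rw [if_neg hnil, dif_neg (by omega)]
      have epar : lift y ⟨l.tail, tail_len_le' l hl⟩ = 0 :=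
        lift_at_mid y _ (by simp only [List.length_tail]; omega)
      rw [epar]
      ring

noncomputable def xvec (m' : ℕ) : (k : ℕ) → V (m'+2) k → (V (m'+2) k → ℚ)
  | 0 => fun _ _ => 1
  | 1 => fun s u => (if u = s then 1 else 0) - (if u = ⟨[lastF m'], by simp⟩ then 1 else 0)
  | (k+2) => fun s =>
      if s.1.head? = some (lastF m') then
        lift (xvec m' k ⟨s.1.tail.tail, by
          simp only [List.length_tail]; have := s.2; omega⟩)
      else fun u => (if u = s then 1 else 0) -
        (if u = ⟨lastF m' :: s.1.tail, by
            simp only [List.length_cons, List.length_tail]; have := s.2; omega⟩ then 1 else 0)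

theorem xvec_first {m' k : ℕ} (s : V (m'+2) (k+2)) (h : s.1.head? ≠ some (lastF m')) :
    xvec m' (k+2) s = fun u => (if u = s then 1 else 0) -
      (if u = ⟨lastF m' :: s.1.tail, by
          simp only [List.length_cons, List.length_tail]; have := s.2; omega⟩ then 1 else 0) := by
  simp only [xvec]
  rw [if_neg h]

theorem xvec_lift {m' k : ℕ} (s : V (m'+2) (k+2)) (h : s.1.head? = some (lastF m')) :
    xvec m' (k+2) s = lift (xvec m' k ⟨s.1.tail.tail, by
      simp only [List.length_tail]; have := s.2; omega⟩) := by
  simp only [xvec]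
  rw [if_pos h]

theorem xvec_ker (m' : ℕ) : ∀ (k : ℕ), ∀ s ∈ SS m' k, xvec m' k s ∈ Ksub (m'+2) k
  | 0 => fun s _ => K0_top _
  | 1 => by
      intro s hs
      simp only [SS, Finset.mem_image] at hs
      obtain ⟨a, ha, rfl⟩ := hs
      exact diff_ker _ _ (by simp) (by simp) (by simp) (by omega)
  | (k+2) => by
      intro s hs
      simp only [SS, Finset.mem_union, Finset.mem_image] at hs
      rcases hs with ⟨q, hq, rfl⟩ | ⟨v, hv, rfl⟩
      · rw [xvec_first _ (by
          simp only [Finset.mem_product, Finset.mem_filter] at hq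
          simpa using hq.1.2)]
        exact diff_ker (⟨q.1 :: List.ofFn q.2, by simp⟩ : V (m'+2) (k+2))
          (⟨lastF m' :: (q.1 :: List.ofFn q.2).tail, by simp⟩ : V (m'+2) (k+2))
          (by simp) (by simp) (by simp) (by omega)
      · rw [xvec_lift _ (by simp)]
        have hvv : (⟨((⟨lastF m' :: 0 :: v.1, by
              have := v.2; simp only [List.length_cons]; omega⟩ : V (m'+2) (k+2))).1.tail.tail, by
            simp only [List.length_tail]
            have := v.2
            simp only [List.length_cons]
            omega⟩ : V (m'+2) k) = v := Subtype.ext rfl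
        rw [hvv]
        exact lift_ker (xvec_ker m' k v hv)

def Afin (m' k : ℕ) : Finset (Fin (m'+2) × (Fin (k+1) → Fin (m'+2))) :=
  (Finset.univ.filter (fun a : Fin (m'+2) => a ≠ lastF m')) ×ˢ Finset.univ

def emb1 {m' k : ℕ} (q : Fin (m'+2) × (Fin (k+1) → Fin (m'+2))) : V (m'+2) (k+2) :=
  ⟨q.1 :: List.ofFn q.2, by simp⟩

def emb2 {m' k : ℕ} (v : V (m'+2) k) : V (m'+2) (k+2) :=
  ⟨lastF m' :: 0 :: v.1, by have := v.2; simp only [List.length_cons]; omega⟩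

theorem SS_eq (m' k : ℕ) :
    SS m' (k+2) = (Afin m' k).image emb1 ∪ (SS m' k).image emb2 := rfl

theorem emb1_inj {m' k : ℕ} : Function.Injective (emb1 (m' := m') (k := k)) := by
  intro q q' h
  rw [Subtype.ext_iff] at h
  obtain ⟨h1, h2⟩ := List.cons.inj h
  exact Prod.ext h1 (List.ofFn_injective h2)

theorem emb2_inj {m' k : ℕ} : Function.Injective (emb2 (m' := m') (k := k)) := by
  intro v v' h
  rw [Subtype.ext_iff] at h
  exact Subtype.ext (List.cons.inj (List.cons.inj h).2).2

theorem SS_disj (m' k : ℕ) :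
    Disjoint ((Afin m' k).image emb1) ((SS m' k).image emb2) := by
  rw [Finset.disjoint_left]
  rintro u hu1 hu2
  simp only [Finset.mem_image] at hu1 hu2
  obtain ⟨q, hq, rfl⟩ := hu1
  obtain ⟨v, hv, hvu⟩ := hu2
  rw [Subtype.ext_iff] at hvu
  have := (List.cons.inj hvu).1
  simp only [Afin, Finset.mem_product, Finset.mem_filter] at hq
  exact hq.1.2 this.symm

theorem sum_SS {m' k : ℕ} (f : V (m'+2) (k+2) → ℚ) :
    ∑ s ∈ SS m' (k+2), f s =
      (∑ q ∈ Afin m' k, f (emb1 q)) + ∑ v ∈ SS m' k, f (emb2 v) := by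
  rw [SS_eq, Finset.sum_union (SS_disj m' k),
    Finset.sum_image (fun x _ y _ h => emb1_inj h),
    Finset.sum_image (fun x _ y _ h => emb2_inj h)]

theorem mem_emb1 {m' k : ℕ} {q} (hq : q ∈ Afin m' k) : emb1 q ∈ SS m' (k+2) := by
  rw [SS_eq]
  exact Finset.mem_union_left _ (Finset.mem_image.2 ⟨q, hq, rfl⟩)

theorem mem_emb2 {m' k : ℕ} {v} (hv : v ∈ SS m' k) : emb2 v ∈ SS m' (k+2) := by
  rw [SS_eq]
  exact Finset.mem_union_right _ (Finset.mem_image.2 ⟨v, hv, rfl⟩)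

theorem head_emb1 {m' k : ℕ} {q} (hq : q ∈ Afin m' k) :
    (emb1 (m' := m') (k := k) q).1.head? ≠ some (lastF m') := by
  simp only [Afin, Finset.mem_product, Finset.mem_filter] at hq
  show (q.1 :: List.ofFn q.2).head? ≠ some (lastF m')
  simp only [List.head?_cons]
  exact fun h => hq.1.2 (Option.some.inj h)

theorem ev1 {m' k : ℕ} {q q'} (hq : q ∈ Afin m' k) (hq' : q' ∈ Afin m' k) :
    xvec m' (k+2) (emb1 q) (emb1 q') = if q' = q then 1 else 0 := by
  rw [xvec_first _ (head_emb1 hq)]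
  beta_reduce
  have h2 : (emb1 q' ≠ (⟨lastF m' :: (emb1 (m':=m') (k:=k) q).1.tail, by
      simp only [List.length_cons, List.length_tail]
      have := (emb1 (m':=m') (k:=k) q).2; omega⟩ : V (m'+2) (k+2))) := by
    intro h
    rw [Subtype.ext_iff] at h
    exact head_emb1 hq' (by rw [show (emb1 (m':=m') (k:=k) q').1.head? = some (lastF m') from
      by rw [h]; rfl])
  rw [if_neg h2, sub_zero]
  by_cases h : q' = q
  · rw [if_pos h, if_pos (by rw [h])]
  · rw [if_neg h, if_neg (fun hc => h (emb1_inj hc))]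

theorem ev3 {m' k : ℕ} {v' : V (m'+2) k} {q'} (hq' : q' ∈ Afin m' k) :
    xvec m' (k+2) (emb2 v') (emb1 q') = 0 := by
  rw [xvec_lift _ (by simp [emb2])]
  rw [show (emb1 q' : V (m'+2) (k+2)) = ⟨q'.1 :: List.ofFn q'.2, by simp⟩ from rfl,
    lift_at_top _ _ _ _ (by simp)]
  rw [if_neg]
  simp only [Afin, Finset.mem_product, Finset.mem_filter] at hq'
  exact hq'.1.2

theorem ev4 {m' k : ℕ} {v v' : V (m'+2) k} (hv : v ∈ SS m' k) :
    xvec m' (k+2) (emb2 v') (emb2 v) = -(xvec m' k v' v) := by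
  have hvt : (⟨(emb2 (m':=m') (k:=k) v').1.tail.tail, by
      simp only [List.length_tail]; have := (emb2 (m':=m') (k:=k) v').2; omega⟩ : V (m'+2) k)
      = v' := Subtype.ext rfl
  rw [xvec_lift _ (by simp [emb2]), hvt]
  have hlen := SS_len m' k v hv
  rw [show (emb2 v : V (m'+2) (k+2)) = ⟨lastF m' :: ((0:Fin (m'+2)) :: v.1), by
      simp only [List.length_cons, hlen]; omega⟩ from rfl,
    lift_at_top _ _ _ _ (by simp [hlen])]
  rw [if_pos rfl]
  congr 1

theorem Ind (m' : ℕ) : ∀ (k : ℕ) (c : V (m'+2) k → ℚ),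
    (∀ s' ∈ SS m' k, ∑ s ∈ SS m' k, c s * xvec m' k s s' = 0) →
    ∀ s ∈ SS m' k, c s = 0
  | 0 => by
      intro c H s hs
      simp only [SS, Finset.mem_singleton] at hs
      subst hs
      have h := H ⟨[], by simp⟩ (by simp [SS])
      rw [show SS m' 0 = {(⟨[], by simp⟩ : V (m'+2) 0)} from rfl, Finset.sum_singleton] at h
      simpa [xvec] using h
  | 1 => by
      intro c H s hs
      simp only [SS, Finset.mem_image] at hs
      obtain ⟨a, ha, rfl⟩ := hs
      simp only [Finset.mem_filter, Finset.mem_univ, true_and] at ha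
      have hmem : (⟨[a], by simp⟩ : V (m'+2) 1) ∈ SS m' 1 :=
        Finset.mem_image.2 ⟨a, by simp [ha], rfl⟩
      have hH := H _ hmem
      rw [show SS m' 1 = (Finset.univ.filter (fun x : Fin (m'+2) => x ≠ lastF m')).image
          (fun a => (⟨[a], by simp⟩ : V (m'+2) 1)) from rfl,
        Finset.sum_image (fun x _ y _ h => by
          rw [Subtype.ext_iff] at h
          exact (List.cons.inj h).1)] at hH
      have e : ∀ b ∈ Finset.univ.filter (fun x : Fin (m'+2) => x ≠ lastF m'),
          c ⟨[b], by simp⟩ * xvec m' 1 ⟨[b], by simp⟩ ⟨[a], by simp⟩ =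
          if b = a then c ⟨[b], by simp⟩ else 0 := by
        intro b hb
        have h2 : (⟨[a], by simp⟩ : V (m'+2) 1) ≠ ⟨[lastF m'], by simp⟩ := by
          intro h
          rw [Subtype.ext_iff] at h
          exact ha (List.cons.inj h).1
        show c ⟨[b], by simp⟩ * ((if (⟨[a], by simp⟩ : V (m'+2) 1) = ⟨[b], by simp⟩ then (1:ℚ)
          else 0) - (if (⟨[a], by simp⟩ : V (m'+2) 1) = ⟨[lastF m'], by simp⟩ then 1 else 0)) = _
        rw [if_neg h2, sub_zero]
        by_cases hab : b = a
        · rw [if_pos (by rw [hab]), if_pos hab, mul_one]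
        · rw [if_neg (fun hc => by
            rw [Subtype.ext_iff] at hc
            exact hab ((List.cons.inj hc).1).symm), if_neg hab, mul_zero]
      rw [Finset.sum_congr rfl e, Finset.sum_ite_eq' _ a
        (fun b => c ⟨[b], by simp⟩), if_pos (by simp [ha])] at hH
      exact hH
  | (k+2) => by
      intro c H s hs
      have hc1 : ∀ q ∈ Afin m' k, c (emb1 q) = 0 := by
        intro q' hq'
        have hH := H (emb1 q') (mem_emb1 hq')
        rw [sum_SS] at hH
        have e1 : ∀ q ∈ Afin m' k,
            c (emb1 q) * xvec m' (k+2) (emb1 q) (emb1 q') =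
            if q = q' then c (emb1 q) else 0 := by
          intro q hq
          rw [ev1 hq hq']
          by_cases h : q = q'
          · rw [if_pos h.symm, if_pos h, mul_one]
          · rw [if_neg (fun hc => h hc.symm), if_neg h, mul_zero]
        have e2 : ∀ v ∈ SS m' k,
            c (emb2 v) * xvec m' (k+2) (emb2 v) (emb1 q') = 0 := by
          intro v hv
          rw [ev3 hq', mul_zero]
        rw [Finset.sum_congr rfl e1, Finset.sum_congr rfl e2, Finset.sum_const_zero, add_zero,
          Finset.sum_ite_eq' _ q' (fun q => c (emb1 q)), if_pos hq'] at hH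
        exact hH
      have hc2 : ∀ v' ∈ SS m' k, c (emb2 v') = 0 := by
        have key : ∀ v ∈ SS m' k,
            ∑ v' ∈ SS m' k, (fun w => -c (emb2 w)) v' * xvec m' k v' v = 0 := by
          intro v hv
          have hH := H (emb2 v) (mem_emb2 hv)
          rw [sum_SS] at hH
          have e1 : ∀ q ∈ Afin m' k,
              c (emb1 q) * xvec m' (k+2) (emb1 q) (emb2 v) = 0 := by
            intro q hq
            rw [hc1 q hq, zero_mul]
          have e2 : ∀ v' ∈ SS m' k,
              c (emb2 v') * xvec m' (k+2) (emb2 v') (emb2 v) =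
              (fun w => -c (emb2 w)) v' * xvec m' k v' v := by
            intro v' hv'
            rw [ev4 hv]
            beta_reduce
            ring
          rw [Finset.sum_congr rfl e1, Finset.sum_const_zero, zero_add,
            Finset.sum_congr rfl e2] at hH
          exact hH
        have hind := Ind m' k (fun w => -c (emb2 w)) key
        intro v' hv'
        have h0 := hind v' hv'
        simpa using h0
      rw [SS_eq, Finset.mem_union] at hs
      rcases hs with hs | hs
      · obtain ⟨q, hq, rfl⟩ := Finset.mem_image.1 hs
        exact hc1 q hq
      · obtain ⟨v', hv', rfl⟩ := Finset.mem_image.1 hs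
        exact hc2 v' hv'

theorem ker_vanish {m d : ℕ} {x : V m d → ℚ} (hx : x ∈ Ksub m d) {S' : Set (V m d)}
    (h0 : ∀ s ∈ S', x s = 0) {v : V m d} (h : PropReach (BalancedTree m d) S' v) :
    x v = 0 := by
  induction h with
  | base hv => exact h0 _ hv
  | @step v w hv hadj hall ihv ihall =>
    have hk := hx v
    have hsum : ∑ u ∈ Finset.univ.filter (fun u => (BalancedTree m d).Adj v u), x u = x w := by
      apply Finset.sum_eq_single_of_mem w
        (Finset.mem_filter.2 ⟨Finset.mem_univ w, hadj⟩)
      intro u hu hne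
      exact ihall u (Finset.mem_filter.1 hu).2 hne
    rw [hsum] at hk
    exact hk

theorem lowerBound {m' K : ℕ} {S' : Set (V (m'+2) K)}
    (hS' : Propagates (BalancedTree (m'+2) K) S') :
    (SS m' K).card ≤ S'.ncard := by
  classical
  have hfin : S'.Finite := Set.toFinite S'
  haveI := hfin.fintype
  let Φ : ({ s // s ∈ SS m' K } → ℚ) →ₗ[ℚ] (S' → ℚ) := {
    toFun := fun c t => ∑ s : {s // s ∈ SS m' K}, c s * xvec m' K s.1 t.1
    map_add' := by
      intro a b
      funext t
      simp [add_mul, Finset.sum_add_distrib]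
    map_smul' := by
      intro r a
      funext t
      simp [Finset.mul_sum, mul_assoc] }
  have claim : ∀ c, Φ c = 0 → c = 0 := by
    intro c hc0
    set X : V (m'+2) K → ℚ := fun u => ∑ s : {s // s ∈ SS m' K}, c s * xvec m' K s.1 u with hX
    have hXK : X ∈ Ksub (m'+2) K := by
      have hXe : X = ∑ s : {s // s ∈ SS m' K}, c s • xvec m' K s.1 := by
        funext u
        simp [hX, Finset.sum_apply]
      rw [hXe]
      exact Submodule.sum_mem _ (fun s _ => Submodule.smul_mem _ _ (xvec_ker m' K s.1 s.2))
    have hX0 : ∀ t ∈ S', X t = 0 := by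
      intro t ht
      have := congrFun hc0 (⟨t, ht⟩ : S')
      exact this
    have hvan : ∀ v, X v = 0 := fun v => ker_vanish hXK hX0 (hS' v)
    set cext : V (m'+2) K → ℚ := fun u => if h : u ∈ SS m' K then c ⟨u, h⟩ else 0 with hcext
    have hsum : ∀ s' ∈ SS m' K, ∑ s ∈ SS m' K, cext s * xvec m' K s s' = 0 := by
      intro s' hs'
      rw [← Finset.sum_coe_sort (SS m' K) (fun s => cext s * xvec m' K s s')]
      rw [Finset.sum_congr rfl (fun (s : {s // s ∈ SS m' K}) _ => by
        rw [show cext s.1 = c s from by rw [hcext]; simp [s.2]] :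
        ∀ s ∈ Finset.univ, cext s.1 * xvec m' K s.1 s' = c s * xvec m' K s.1 s')]
      exact hvan s'
    have hc := Ind m' K cext hsum
    funext t
    have h0 := hc t.1 t.2
    rw [hcext] at h0
    simp only [t.2, dif_pos] at h0
    simpa using h0
  have hinj : Function.Injective Φ := by
    intro a b hab
    have : Φ (a - b) = 0 := by rw [map_sub, hab, sub_self]
    have hz := claim _ this
    exact sub_eq_zero.1 hz
  have hrank := LinearMap.finrank_le_finrank_of_injective hinj
  rw [Module.finrank_pi, Module.finrank_pi] at hrank
  rw [Fintype.card_coe] at hrank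
  rwa [← Nat.card_coe_set_eq, Nat.card_eq_fintype_card]

end BTaux


/-- For `m ≥ 2`, `k ≥ 1`, in the balanced `m`-ary tree of depth `k` the
minimum cardinality of a propagating set consisting only of leaves (vertices at distance `k`
from the root, i.e. words of length `k`) equals the unrestricted minimum `π`; equivalently,
some set of leaves of cardinality `π` propagates. -/
theorem propNumLeaf_eq_propNum_balancedTree (m k : ℕ) (hm : 2 ≤ m) (hk : 1 ≤ k) :
    sInf {n : ℕ | ∃ S : Set {l : List (Fin m) // l.length ≤ k},
        (∀ v ∈ S, (v : {l : List (Fin m) // l.length ≤ k}).1.length = k) ∧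
        S.ncard = n ∧ Propagates (BalancedTree m k) S}
      = propNum (BalancedTree m k) ∧
    ∃ S : Set {l : List (Fin m) // l.length ≤ k},
      (∀ v ∈ S, (v : {l : List (Fin m) // l.length ≤ k}).1.length = k) ∧
      Propagates (BalancedTree m k) S ∧ S.ncard = propNum (BalancedTree m k) := by
  obtain ⟨m', rfl⟩ : ∃ m', m = m' + 2 := ⟨m - 2, by omega⟩
  set N := (BTaux.SS m' k).card with hN
  have hleaf : ∀ v ∈ (↑(BTaux.SS m' k) : Set (BTaux.V (m'+2) k)), (v : BTaux.V (m'+2) k).1.length = k :=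
    fun v hv => BTaux.SS_len m' k v hv
  have hprop : Propagates (BalancedTree (m'+2) k) (↑(BTaux.SS m' k) : Set _) :=
    BTaux.SS_prop m' k
  have hcard : (↑(BTaux.SS m' k) : Set (BTaux.V (m'+2) k)).ncard = N :=
    Set.ncard_coe_finset _
  have hπle : propNum (BalancedTree (m'+2) k) ≤ N :=
    Nat.sInf_le ⟨↑(BTaux.SS m' k), hcard, hprop⟩
  have hπge : N ≤ propNum (BalancedTree (m'+2) k) := by
    have hne : {n : ℕ | ∃ S : Set (BTaux.V (m'+2) k), S.ncard = n ∧
        Propagates (BalancedTree (m'+2) k) S}.Nonempty := ⟨N, ↑(BTaux.SS m' k), hcard, hprop⟩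
    obtain ⟨S0, hS0card, hS0prop⟩ := Nat.sInf_mem hne
    rw [propNum, ← hS0card]
    exact BTaux.lowerBound hS0prop
  have hπ : propNum (BalancedTree (m'+2) k) = N := le_antisymm hπle hπge
  have hLle : sInf {n : ℕ | ∃ S : Set (BTaux.V (m'+2) k),
      (∀ v ∈ S, (v : BTaux.V (m'+2) k).1.length = k) ∧
      S.ncard = n ∧ Propagates (BalancedTree (m'+2) k) S} ≤ N :=
    Nat.sInf_le ⟨↑(BTaux.SS m' k), hleaf, hcard, hprop⟩
  have hLge : N ≤ sInf {n : ℕ | ∃ S : Set (BTaux.V (m'+2) k),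
      (∀ v ∈ S, (v : BTaux.V (m'+2) k).1.length = k) ∧
      S.ncard = n ∧ Propagates (BalancedTree (m'+2) k) S} := by
    have hne : {n : ℕ | ∃ S : Set (BTaux.V (m'+2) k),
        (∀ v ∈ S, (v : BTaux.V (m'+2) k).1.length = k) ∧
        S.ncard = n ∧ Propagates (BalancedTree (m'+2) k) S}.Nonempty :=
      ⟨N, ↑(BTaux.SS m' k), hleaf, hcard, hprop⟩
    obtain ⟨S0, hS0leaf, hS0card, hS0prop⟩ := Nat.sInf_mem hne
    rw [← hS0card]
    exact BTaux.lowerBound hS0prop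
  constructor
  · rw [hπ]
    exact le_antisymm hLle hLge
  · exact ⟨↑(BTaux.SS m' k), hleaf, hprop, by rw [hπ, hcard]⟩
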